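/- Let S = M₁ − M₂ where M_i = Σ_{j=1}^k j·N_j^{(i)} with all 2k Poisson variables N_j^{(i)} (mean λ_j^{(i)}μ) mutually independent. Then for every n ∈ ℤ, Pr{S = n} = e^{−(Λ^{(1)}+Λ^{(2)})μ} Σ_{(n₁,…,n_k)∈ Θ̃(k,n)} ∏_{j=1}^k (λ_j^{(1)}/λ_j^{(2)})^{n_j/2} I_{|n_j|}(2μ√(λ_j^{(1)}λ_j^{(2)})), where Θ̃(k,n) = {(n₁,…,n_k) ∈ ℤ^k : Σ_j j·n_j = n}, Λ^{(i)} = Σ_{j=1}^k λ_j^{(i)}, and I_ν is the modified Bessel function of the first kind. -/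

import Mathlib

open Real MeasureTheory ProbabilityTheory

/-- The modified Bessel function of the first kind of nonnegative integer order. -/
noncomputable def besselI (ν : ℕ) (x : ℝ) : ℝ :=
  ∑' m : ℕ, (x / 2) ^ (2 * m + ν) / (m.factorial * Real.Gamma (m + ν + 1))

lemma besselI_nonneg (ν : ℕ) {x : ℝ} (hx : 0 ≤ x) : 0 ≤ besselI ν x := by
  refine tsum_nonneg fun m => ?_
  have hg : 0 < Real.Gamma ((m : ℝ) + ν + 1) := Real.Gamma_pos_of_pos (by positivity)
  positivity

lemma tsum_pi_prod : ∀ (k : ℕ) (h : Fin k → ℕ → ENNReal),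
    ∑' m : Fin k → ℕ, ∏ j, h j (m j) = ∏ j, ∑' t, h j t := by
  intro k
  induction k with
  | zero =>
      intro h
      rw [tsum_eq_single (default : Fin 0 → ℕ)
        (fun b hb => absurd (Subsingleton.elim b default) hb)]
      simp
  | succ k ih =>
    intro h
    rw [← (Fin.consEquiv (fun _ : Fin (k+1) => ℕ)).tsum_eq]
    rw [ENNReal.tsum_prod']
    simp only [Fin.consEquiv_apply]
    have : ∀ (x : ℕ) (p : Fin k → ℕ),
        (∏ j, h j ((Fin.cons x p : Fin (k+1) → ℕ) j)) = h 0 x * ∏ j, h j.succ (p j) := by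
      intro x p
      rw [Fin.prod_univ_succ]
      simp
    simp only [this]
    simp only [ENNReal.tsum_mul_left, ENNReal.tsum_mul_right]
    rw [ih (fun j => h j.succ), Fin.prod_univ_succ]

lemma skellam_summable {x y : ℝ} (hx : 0 < x) (hy : 0 < y) (u v : ℕ) :
    Summable (fun t : ℕ => Real.exp (-x) * x ^ (t + u) / (t + u).factorial *
      (Real.exp (-y) * y ^ (t + v) / (t + v).factorial)) := by
  have hg : Summable (fun t : ℕ =>
      (Real.exp (-x) * x ^ u * (Real.exp (-y) * y ^ v)) * ((x * y) ^ t / t.factorial)) :=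
    (Real.summable_pow_div_factorial (x * y)).mul_left _
  refine Summable.of_nonneg_of_le (fun t => by positivity) (fun t => ?_) hg
  have h1 : (t.factorial : ℝ) ≤ (t + u).factorial := by
    exact_mod_cast Nat.factorial_le (by omega)
  have h2 : (1 : ℝ) ≤ (t + v).factorial := by
    exact_mod_cast Nat.one_le_iff_ne_zero.mpr (Nat.factorial_pos _).ne'
  have hf1 : (0:ℝ) < t.factorial := by positivity
  have hf2 : (0:ℝ) < (t + u).factorial := by positivity
  have hf3 : (0:ℝ) < (t + v).factorial := by positivity
  calc Real.exp (-x) * x ^ (t + u) / (t + u).factorial *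
        (Real.exp (-y) * y ^ (t + v) / (t + v).factorial)
      ≤ Real.exp (-x) * x ^ (t + u) / t.factorial *
        (Real.exp (-y) * y ^ (t + v) / 1) := by
        gcongr <;> positivity
    _ = (Real.exp (-x) * x ^ u * (Real.exp (-y) * y ^ v)) * ((x * y) ^ t / t.factorial) := by
        rw [pow_add, pow_add, mul_pow]
        field_simp

lemma skellam_real {x y : ℝ} (hx : 0 < x) (hy : 0 < y) (f : ℤ) :
    ∑' t : ℕ, Real.exp (-x) * x ^ (t + f.toNat) / (t + f.toNat).factorial *
      (Real.exp (-y) * y ^ (t + (-f).toNat) / (t + (-f).toNat).factorial)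
    = Real.exp (-x) * Real.exp (-y) * (Real.sqrt (x / y)) ^ f *
        besselI f.natAbs (2 * Real.sqrt (x * y)) := by
  have hy0 : y ≠ 0 := hy.ne'
  have hx0 : x ≠ 0 := hx.ne'
  have hxy : (0:ℝ) ≤ x * y := by positivity
  have hsq : Real.sqrt (x * y) ^ 2 = x * y := Real.sq_sqrt hxy
  rw [besselI]
  have h2 : (2 * Real.sqrt (x * y)) / 2 = Real.sqrt (x * y) := by ring
  rw [h2, ← tsum_mul_left]
  refine tsum_congr (fun t => ?_)
  have hgam : Real.Gamma ((t : ℝ) + (f.natAbs : ℝ) + 1) = ((t + f.natAbs).factorial : ℝ) := by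
    rw [show ((t:ℝ) + (f.natAbs:ℝ) + 1) = ((t + f.natAbs : ℕ) : ℝ) + 1 by push_cast; ring,
      Real.Gamma_nat_eq_factorial]
  rw [hgam]
  have hfpos : (0:ℝ) < (t + f.natAbs).factorial := by positivity
  have htpos : (0:ℝ) < t.factorial := by positivity
  have hsqm : Real.sqrt (x * y) ^ (2 * t) = (x * y) ^ t := by
    rw [pow_mul, hsq]
  rcases le_or_gt 0 f with hf | hf
  · have hd : f.toNat = f.natAbs := by omega
    have hv : (-f).toNat = 0 := by omega
    have hzpow : (Real.sqrt (x / y)) ^ f = (Real.sqrt (x / y)) ^ (f.natAbs) := by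
      rw [show f = (f.natAbs : ℤ) by omega, zpow_natCast]
      simp [Int.natAbs_abs]
    rw [hd, hv, hzpow]
    set d := f.natAbs
    have key : Real.sqrt (x / y) ^ d * Real.sqrt (x * y) ^ (2 * t + d)
        = x ^ d * (x * y) ^ t := by
      rw [pow_add, hsqm, ← mul_assoc, mul_comm (Real.sqrt (x/y) ^ d), mul_assoc,
        ← mul_pow]
      have : Real.sqrt (x / y) * Real.sqrt (x * y) = x := by
        rw [← Real.sqrt_mul (by positivity)]
        rw [show x / y * (x * y) = x ^ 2 by field_simp, Real.sqrt_sq hx.le]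
      rw [this, mul_comm]
    have expand : Real.exp (-x) * Real.exp (-y) * Real.sqrt (x / y) ^ d *
        (Real.sqrt (x * y) ^ (2 * t + d) / (↑t.factorial * ↑(t + d).factorial))
        = Real.exp (-x) * Real.exp (-y) * (x ^ d * (x * y) ^ t) /
          (↑t.factorial * ↑(t + d).factorial) := by
      rw [← key]; ring
    rw [expand]
    rw [add_zero, pow_add, mul_pow]
    field_simp
  · have hd : (-f).toNat = f.natAbs := by omega
    have hu : f.toNat = 0 := by omega
    have hzpow : (Real.sqrt (x / y)) ^ f = (Real.sqrt (y / x)) ^ (f.natAbs) := by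
      rw [show f = -(f.natAbs : ℤ) by omega, zpow_neg, zpow_natCast, ← inv_pow,
        ← Real.sqrt_inv, inv_div]
      simp [Int.natAbs_abs]
    rw [hd, hu, hzpow]
    set d := f.natAbs
    have key : Real.sqrt (y / x) ^ d * Real.sqrt (x * y) ^ (2 * t + d)
        = y ^ d * (x * y) ^ t := by
      rw [pow_add, hsqm, ← mul_assoc, mul_comm (Real.sqrt (y/x) ^ d), mul_assoc,
        ← mul_pow]
      have : Real.sqrt (y / x) * Real.sqrt (x * y) = y := by
        rw [← Real.sqrt_mul (by positivity)]
        rw [show y / x * (x * y) = y ^ 2 by field_simp, Real.sqrt_sq hy.le]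
      rw [this, mul_comm]
    have expand : Real.exp (-x) * Real.exp (-y) * Real.sqrt (y / x) ^ d *
        (Real.sqrt (x * y) ^ (2 * t + d) / (↑t.factorial * ↑(t + d).factorial))
        = Real.exp (-x) * Real.exp (-y) * (y ^ d * (x * y) ^ t) /
          (↑t.factorial * ↑(t + d).factorial) := by
      rw [← key]; ring
    rw [expand]
    rw [add_zero, pow_add, mul_pow]
    field_simp

lemma skellam_ennreal {x y : ℝ} (hx : 0 < x) (hy : 0 < y) (f : ℤ) :
    ∑' t : ℕ, ENNReal.ofReal (Real.exp (-x) * x ^ (t + f.toNat) / (t + f.toNat).factorial)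
      * ENNReal.ofReal (Real.exp (-y) * y ^ (t + (-f).toNat) / (t + (-f).toNat).factorial)
    = ENNReal.ofReal (Real.exp (-x) * Real.exp (-y) * (Real.sqrt (x / y)) ^ f *
        besselI f.natAbs (2 * Real.sqrt (x * y))) := by
  have hterm : ∀ t : ℕ,
      ENNReal.ofReal (Real.exp (-x) * x ^ (t + f.toNat) / (t + f.toNat).factorial)
        * ENNReal.ofReal (Real.exp (-y) * y ^ (t + (-f).toNat) / (t + (-f).toNat).factorial)
      = ENNReal.ofReal (Real.exp (-x) * x ^ (t + f.toNat) / (t + f.toNat).factorial *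
          (Real.exp (-y) * y ^ (t + (-f).toNat) / (t + (-f).toNat).factorial)) := by
    intro t
    rw [ENNReal.ofReal_mul (by positivity)]
  simp only [hterm]
  rw [← ENNReal.ofReal_tsum_of_nonneg (fun t => by positivity)
    (skellam_summable hx hy _ _), skellam_real hx hy f]

lemma step1 {Ω : Type*} [MeasurableSpace Ω]
    (P : Measure Ω) [IsProbabilityMeasure P] (k : ℕ)
    (N : Fin 2 → Fin k → Ω → ℕ) (hmeas : ∀ i j, Measurable (N i j))
    (hindep : iIndepFun (fun p : Fin 2 × Fin k => N p.1 p.2) P) (n : ℤ) :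
    P {ω | ((∑ j, (j.1 + 1) * N 0 j ω : ℕ) : ℤ) -
          ((∑ j, (j.1 + 1) * N 1 j ω : ℕ) : ℤ) = n}
      = ∑' y : Fin 2 × Fin k → ℕ,
          if ((∑ j, (j.1 + 1) * y (0, j) : ℕ) : ℤ) -
              ((∑ j, (j.1 + 1) * y (1, j) : ℕ) : ℤ) = n
          then ∏ p : Fin 2 × Fin k, P {ω | N p.1 p.2 ω = y p} else 0 := by
  classical
  set A : (Fin 2 × Fin k → ℕ) → Set Ω := fun y =>
    {ω | ∀ p : Fin 2 × Fin k, N p.1 p.2 ω = y p} with hA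
  set E : (Fin 2 × Fin k → ℕ) → Set Ω := fun y =>
    if ((∑ j, (j.1 + 1) * y (0, j) : ℕ) : ℤ) -
        ((∑ j, (j.1 + 1) * y (1, j) : ℕ) : ℤ) = n
    then A y else ∅ with hE
  have hAmeas : ∀ y, MeasurableSet (A y) := by
    intro y
    have : A y = ⋂ p : Fin 2 × Fin k, (N p.1 p.2) ⁻¹' {y p} := by
      ext ω; simp [hA, Set.mem_iInter]
    rw [this]
    exact MeasurableSet.iInter fun p => (hmeas p.1 p.2) (measurableSet_singleton _)
  have hEmeas : ∀ y, MeasurableSet (E y) := by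
    intro y
    by_cases h : ((∑ j, (j.1 + 1) * y (0, j) : ℕ) : ℤ) -
        ((∑ j, (j.1 + 1) * y (1, j) : ℕ) : ℤ) = n
    · rw [hE]; simp only [if_pos h]; exact hAmeas y
    · rw [hE]; simp only [if_neg h]; exact MeasurableSet.empty
  have hdisj : Pairwise (Function.onFun Disjoint E) := by
    intro y y' hne
    refine Set.disjoint_left.mpr fun ω h1 h2 => ?_
    rw [hE] at h1 h2
    simp only at h1 h2
    split_ifs at h1 h2
    · exact hne (funext fun p => (h1 p).symm.trans (h2 p))
    · exact h2
    · exact h1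
    · exact h1
  have hcover : {ω | ((∑ j, (j.1 + 1) * N 0 j ω : ℕ) : ℤ) -
          ((∑ j, (j.1 + 1) * N 1 j ω : ℕ) : ℤ) = n} = ⋃ y, E y := by
    ext ω
    simp only [Set.mem_setOf_eq, Set.mem_iUnion]
    constructor
    · intro h
      refine ⟨fun p => N p.1 p.2 ω, ?_⟩
      rw [hE]
      simp only
      rw [if_pos h]
      exact fun p => rfl
    · rintro ⟨y, hy⟩
      rw [hE] at hy
      simp only at hy
      split_ifs at hy with hc
      · have e0 : (∑ j, (j.1 + 1) * N 0 j ω) = ∑ j, (j.1 + 1) * y (0, j) :=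
          Finset.sum_congr rfl fun j _ => by rw [hy (0, j)]
        have e1 : (∑ j, (j.1 + 1) * N 1 j ω) = ∑ j, (j.1 + 1) * y (1, j) :=
          Finset.sum_congr rfl fun j _ => by rw [hy (1, j)]
        rw [e0, e1]
        exact hc
      · exact hy.elim
  rw [hcover, measure_iUnion hdisj hEmeas]
  refine tsum_congr fun y => ?_
  rw [hE]
  simp only
  by_cases h : ((∑ j, (j.1 + 1) * y (0, j) : ℕ) : ℤ) -
        ((∑ j, (j.1 + 1) * y (1, j) : ℕ) : ℤ) = n
  · rw [if_pos h, if_pos h]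
    have hprod := hindep.measure_inter_preimage_eq_mul (S := Finset.univ)
      (sets := fun p => {y p}) (fun p _ => measurableSet_singleton _)
    have hseteq : (⋂ p ∈ Finset.univ, (fun q : Fin 2 × Fin k => N q.1 q.2) p ⁻¹' {y p}) = A y := by
      ext ω
      simp [hA]
    rw [hseteq] at hprod
    rw [hprod]
    rfl
  · rw [if_neg h, if_neg h]
    exact measure_empty

lemma step2 {k : ℕ} (w : Fin 2 → Fin k → ℕ → ENNReal) (n : ℤ) :
    ∑' y : Fin 2 × Fin k → ℕ,
        (if ((∑ j, (j.1 + 1) * y (0, j) : ℕ) : ℤ) -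
            ((∑ j, (j.1 + 1) * y (1, j) : ℕ) : ℤ) = n
         then ∏ p : Fin 2 × Fin k, w p.1 p.2 (y p) else 0)
    = ∑' f : Fin k → ℤ, if (∑ j, (j.1 + 1 : ℤ) * f j) = n then
        ∏ j, ∑' t : ℕ, w 0 j (t + (f j).toNat) * w 1 j (t + (-f j).toNat) else 0 := by
  classical
  set φ : (Fin 2 × Fin k → ℕ) → (Fin k → ℤ) :=
    fun y j => (y (0, j) : ℤ) - (y (1, j) : ℤ) with hφ
  have castid : ∀ y : Fin 2 × Fin k → ℕ,
      ((∑ j, (j.1 + 1) * y (0, j) : ℕ) : ℤ) - ((∑ j, (j.1 + 1) * y (1, j) : ℕ) : ℤ)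
        = ∑ j, (j.1 + 1 : ℤ) * φ y j := by
    intro y
    rw [hφ]
    push_cast
    rw [← Finset.sum_sub_distrib]
    exact Finset.sum_congr rfl fun j _ => by ring
  -- fiber decomposition
  have expand : ∀ y : Fin 2 × Fin k → ℕ,
      (if ((∑ j, (j.1 + 1) * y (0, j) : ℕ) : ℤ) -
            ((∑ j, (j.1 + 1) * y (1, j) : ℕ) : ℤ) = n
       then ∏ p : Fin 2 × Fin k, w p.1 p.2 (y p) else 0)
      = ∑' f : Fin k → ℤ, if φ y = f then
          (if (∑ j, (j.1 + 1 : ℤ) * f j) = n then ∏ p : Fin 2 × Fin k, w p.1 p.2 (y p) else 0)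
          else 0 := by
    intro y
    rw [tsum_eq_single (φ y) (fun f hf => if_neg fun h => hf h.symm), if_pos rfl, castid y]
  simp only [expand]
  rw [ENNReal.tsum_comm]
  refine tsum_congr fun f => ?_
  by_cases hH : (∑ j, (j.1 + 1 : ℤ) * f j) = n
  · rw [if_pos hH]
    simp only [if_pos hH]
    -- now reindex the inner sum by the minimum function
    set ψ : (Fin k → ℕ) → (Fin 2 × Fin k → ℕ) :=
      fun m p => m p.2 + (if p.1 = 0 then (f p.2).toNat else (-(f p.2)).toNat) with hψ
    have hψinj : Function.Injective ψ := by
      intro m m' h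
      funext j
      have := congrFun h (0, j)
      simp only [hψ] at this
      omega
    have hsupp : Function.support (fun y => if φ y = f then
        ∏ p : Fin 2 × Fin k, w p.1 p.2 (y p) else 0) ⊆ Set.range ψ := by
      intro y hy
      have hc : φ y = f := by
        by_contra hc
        simp [hc] at hy
      refine ⟨fun j => min (y (0, j)) (y (1, j)), ?_⟩
      funext p
      obtain ⟨i, j⟩ := p
      have hfj : (y (0, j) : ℤ) - (y (1, j) : ℤ) = f j := congrFun hc j
      fin_cases i <;> simp [hψ] <;> omega
    have hre := Function.Injective.tsum_eq hψinj hsupp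
    rw [← hre]
    have hcond : ∀ m : Fin k → ℕ, φ (ψ m) = f := by
      intro m
      funext j
      simp only [hφ, hψ]
      simp only [show ((0:Fin 2) = 0) = True by simp, show ((1:Fin 2) = 0) = False by simp,
        if_true, if_false]
      omega
    simp only [hcond, if_pos]
    have hprodeq : ∀ m : Fin k → ℕ,
        (∏ p : Fin 2 × Fin k, w p.1 p.2 (ψ m p))
        = ∏ j, (w 0 j (m j + (f j).toNat) * w 1 j (m j + (-f j).toNat)) := by
      intro m
      rw [Fintype.prod_prod_type]
      rw [Fin.prod_univ_two]
      rw [← Finset.prod_mul_distrib]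
      refine Finset.prod_congr rfl fun j _ => ?_
      simp [hψ]
    simp only [hprodeq]
    exact tsum_pi_prod k (fun j t => w 0 j (t + (f j).toNat) * w 1 j (t + (-f j).toNat))
  · rw [if_neg hH]
    simp only [if_neg hH]
    simp

lemma step3 {k : ℕ} (lam : Fin 2 → Fin k → ℝ) (hlam : ∀ i j, 0 < lam i j)
    (μ : ℝ) (hμ : 0 < μ) (n : ℤ) (w : Fin 2 → Fin k → ℕ → ENNReal)
    (hw : ∀ i j m, w i j m = ENNReal.ofReal (Real.exp (-(lam i j * μ)) *
      (lam i j * μ) ^ m / m.factorial))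
    (hfin : (∑' f : Fin k → ℤ, if (∑ j, (j.1 + 1 : ℤ) * f j) = n then
        ∏ j, ∑' t : ℕ, w 0 j (t + (f j).toNat) * w 1 j (t + (-(f j)).toNat) else 0) ≠ ⊤) :
    (∑' f : Fin k → ℤ, if (∑ j, (j.1 + 1 : ℤ) * f j) = n then
        ∏ j, ∑' t : ℕ, w 0 j (t + (f j).toNat) * w 1 j (t + (-(f j)).toNat) else 0)
    = ENNReal.ofReal (Real.exp (-((∑ j, lam 0 j) + ∑ j, lam 1 j) * μ) *
        ∑' f : Fin k → ℤ,
          if (∑ j, (j.1 + 1 : ℤ) * f j) = n then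
            ∏ j, (Real.sqrt (lam 0 j / lam 1 j)) ^ (f j) *
              besselI (f j).natAbs (2 * μ * Real.sqrt (lam 0 j * lam 1 j))
          else 0) := by
  classical
  set E : ℝ := Real.exp (-((∑ j, lam 0 j) + ∑ j, lam 1 j) * μ) with hEdef
  set R : (Fin k → ℤ) → ℝ := fun f => ∏ j, (Real.sqrt (lam 0 j / lam 1 j)) ^ (f j) *
      besselI (f j).natAbs (2 * μ * Real.sqrt (lam 0 j * lam 1 j)) with hRdef
  have hRnonneg : ∀ f, 0 ≤ R f := by
    intro f
    refine Finset.prod_nonneg fun j _ => mul_nonneg (zpow_nonneg (Real.sqrt_nonneg _) _)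
      (besselI_nonneg _ (by positivity))
  have hE0 : 0 ≤ E := (Real.exp_pos _).le
  -- per-coordinate Skellam value
  have hsk : ∀ (j : Fin k) (g : ℤ),
      (∑' t : ℕ, w 0 j (t + g.toNat) * w 1 j (t + (-g).toNat))
      = ENNReal.ofReal (Real.exp (-(lam 0 j * μ)) * Real.exp (-(lam 1 j * μ)) *
          (Real.sqrt (lam 0 j / lam 1 j)) ^ g *
          besselI g.natAbs (2 * μ * Real.sqrt (lam 0 j * lam 1 j))) := by
    intro j g
    have h1 : Real.sqrt ((lam 0 j * μ) / (lam 1 j * μ)) = Real.sqrt (lam 0 j / lam 1 j) := by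
      rw [mul_div_mul_right _ _ hμ.ne']
    have h2 : 2 * Real.sqrt ((lam 0 j * μ) * (lam 1 j * μ))
        = 2 * μ * Real.sqrt (lam 0 j * lam 1 j) := by
      rw [show (lam 0 j * μ) * (lam 1 j * μ) = μ ^ 2 * (lam 0 j * lam 1 j) by ring,
        Real.sqrt_mul (sq_nonneg μ), Real.sqrt_sq hμ.le]
      ring
    have := skellam_ennreal (x := lam 0 j * μ) (y := lam 1 j * μ)
      (mul_pos (hlam 0 j) hμ) (mul_pos (hlam 1 j) hμ) g
    rw [h1, h2] at this
    simp only [hw]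
    exact this
  -- rewrite the whole sum
  have key : ∀ f : Fin k → ℤ,
      (if (∑ j, (j.1 + 1 : ℤ) * f j) = n then
        ∏ j, ∑' t : ℕ, w 0 j (t + (f j).toNat) * w 1 j (t + (-(f j)).toNat) else 0)
      = ENNReal.ofReal (E * (if (∑ j, (j.1 + 1 : ℤ) * f j) = n then R f else 0)) := by
    intro f
    by_cases hH : (∑ j, (j.1 + 1 : ℤ) * f j) = n
    · rw [if_pos hH, if_pos hH]
      have : (∏ j, ∑' t : ℕ, w 0 j (t + (f j).toNat) * w 1 j (t + (-(f j)).toNat))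
          = ∏ j, ENNReal.ofReal (Real.exp (-(lam 0 j * μ)) * Real.exp (-(lam 1 j * μ)) *
              (Real.sqrt (lam 0 j / lam 1 j)) ^ (f j) *
              besselI (f j).natAbs (2 * μ * Real.sqrt (lam 0 j * lam 1 j))) :=
        Finset.prod_congr rfl fun j _ => hsk j (f j)
      rw [this, ← ENNReal.ofReal_prod_of_nonneg (fun j _ => by
        have h1 := (Real.exp_pos (-(lam 0 j * μ))).le
        have h2 := (Real.exp_pos (-(lam 1 j * μ))).le
        have h3 : (0:ℝ) ≤ (Real.sqrt (lam 0 j / lam 1 j)) ^ (f j) :=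
          zpow_nonneg (Real.sqrt_nonneg _) _
        have h4 : (0:ℝ) ≤ besselI (f j).natAbs (2 * μ * Real.sqrt (lam 0 j * lam 1 j)) :=
          besselI_nonneg _ (by positivity)
        positivity)]
      congr 1
      have hEeq : (∏ j, Real.exp (-(lam 0 j * μ)) * Real.exp (-(lam 1 j * μ))) = E := by
        rw [Finset.prod_mul_distrib, ← Real.exp_sum, ← Real.exp_sum, ← Real.exp_add, hEdef]
        congr 1
        rw [Finset.sum_neg_distrib, Finset.sum_neg_distrib, ← Finset.sum_mul, ← Finset.sum_mul]
        ring
      rw [show (∏ j, Real.exp (-(lam 0 j * μ)) * Real.exp (-(lam 1 j * μ)) *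
            (Real.sqrt (lam 0 j / lam 1 j)) ^ (f j) *
            besselI (f j).natAbs (2 * μ * Real.sqrt (lam 0 j * lam 1 j)))
          = (∏ j, Real.exp (-(lam 0 j * μ)) * Real.exp (-(lam 1 j * μ))) *
            ∏ j, (Real.sqrt (lam 0 j / lam 1 j)) ^ (f j) *
              besselI (f j).natAbs (2 * μ * Real.sqrt (lam 0 j * lam 1 j)) from by
          rw [← Finset.prod_mul_distrib]
          exact Finset.prod_congr rfl fun j _ => by ring]
      rw [hEeq]
    · rw [if_neg hH, if_neg hH]
      simp
  simp only [key] at hfin ⊢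
  -- summability of the real series
  have hnonneg : ∀ f : Fin k → ℤ,
      0 ≤ E * (if (∑ j, (j.1 + 1 : ℤ) * f j) = n then R f else 0) := by
    intro f
    by_cases hH : (∑ j, (j.1 + 1 : ℤ) * f j) = n <;>
      simp [hH, hE0, mul_nonneg hE0 (hRnonneg f)]
  have hsummable : Summable (fun f : Fin k → ℤ =>
      E * (if (∑ j, (j.1 + 1 : ℤ) * f j) = n then R f else 0)) := by
    have := ENNReal.summable_toReal hfin
    refine this.congr fun f => ?_
    rw [ENNReal.toReal_ofReal (hnonneg f)]
  rw [← ENNReal.ofReal_tsum_of_nonneg hnonneg hsummable]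
  rw [tsum_mul_left]

/-- The pmf of the generalized Skellam variable `S = M₁ - M₂` as a sum over
`Θ̃(k,n) = {(n₁,…,n_k) ∈ ℤ^k : Σ_j j n_j = n}` of products of Bessel terms. -/
theorem generalized_skellam_pmf {Ω : Type*} [MeasurableSpace Ω]
    (P : Measure Ω) [IsProbabilityMeasure P]
    (k : ℕ) (hk : 1 ≤ k) (lam : Fin 2 → Fin k → ℝ)
    (hlam : ∀ i j, 0 < lam i j) (μ : ℝ) (hμ : 0 < μ)
    (N : Fin 2 → Fin k → Ω → ℕ) (hmeas : ∀ i j, Measurable (N i j))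
    (hindep : iIndepFun (fun p : Fin 2 × Fin k => N p.1 p.2) P)
    (hpois : ∀ i j, ∀ m : ℕ,
      P {ω | N i j ω = m} =
        ENNReal.ofReal (Real.exp (-(lam i j * μ)) * (lam i j * μ) ^ m /
          m.factorial)) :
    ∀ n : ℤ,
      P {ω | ((∑ j, (j.1 + 1) * N 0 j ω : ℕ) : ℤ) -
          ((∑ j, (j.1 + 1) * N 1 j ω : ℕ) : ℤ) = n} =
        ENNReal.ofReal (Real.exp (-((∑ j, lam 0 j) + ∑ j, lam 1 j) * μ) *
          ∑' f : Fin k → ℤ,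
            if (∑ j, (j.1 + 1 : ℤ) * f j) = n then
              ∏ j, (Real.sqrt (lam 0 j / lam 1 j)) ^ (f j) *
                besselI (f j).natAbs (2 * μ * Real.sqrt (lam 0 j * lam 1 j))
            else 0) := by
  intro n
  have h1 := step1 P k N hmeas hindep n
  have h2 := step2 (fun i j m => P {ω | N i j ω = m}) n
  have h12 : P {ω | ((∑ j, (j.1 + 1) * N 0 j ω : ℕ) : ℤ) -
      ((∑ j, (j.1 + 1) * N 1 j ω : ℕ) : ℤ) = n}
      = ∑' f : Fin k → ℤ, if (∑ j, (j.1 + 1 : ℤ) * f j) = n then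
          ∏ j, ∑' t : ℕ, (fun i j m => P {ω | N i j ω = m}) 0 j (t + (f j).toNat) *
            (fun i j m => P {ω | N i j ω = m}) 1 j (t + (-(f j)).toNat) else 0 :=
    h1.trans h2
  have hfin : (∑' f : Fin k → ℤ, if (∑ j, (j.1 + 1 : ℤ) * f j) = n then
      ∏ j, ∑' t : ℕ, (fun i j m => P {ω | N i j ω = m}) 0 j (t + (f j).toNat) *
        (fun i j m => P {ω | N i j ω = m}) 1 j (t + (-(f j)).toNat) else 0) ≠ ⊤ := by
    rw [← h12]
    exact measure_ne_top P _
  have h3 := step3 lam hlam μ hμ n (fun i j m => P {ω | N i j ω = m})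
    (fun i j m => hpois i j m) hfin
  exact h12.trans h3
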